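/- Let G be a compact subgroup of O(N), let A ⊂ ℝ^N be open and bounded, and suppose φ : A → U × V is a C¹ diffeomorphism onto a product U × V with U ⊂ ℝ^δ, V ⊂ ℝ^{N−δ} open and bounded, such that there are constants 0 < C₀ ≤ D₀ with C₀ ≤ |det Dφ^{-1}(z)| ≤ D₀ for all z ∈ U × V, and such that for all y ∈ A, U × Π₂(φ(y)) ⊂ φ(O^y_G ∩ A). Then every G-invariant u ∈ L^p(A) (p > 1) satisfies u(φ^{-1}(v₁, v₂)) = ũ(v₂) for a function ũ ∈ L^p(V) depending only on the second coordinate, and there exist positive constants c, C independent of u with c (∫_V |ũ(v₂)|^p dv₂)^{1/p} ≤ (∫_A |u(x)|^p dx)^{1/p} ≤ C (∫_V |ũ(v₂)|^p dv₂)^{1/p}. -/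

import Mathlib

open MeasureTheory Metric Bornology ENNReal

noncomputable section

/-- `E n` is Euclidean space `ℝ^n`. -/
abbrev E (n : ℕ) : Type := EuclideanSpace ℝ (Fin n)

/-- The orbit `O^x_G = {g x : g ∈ G}` of a point `x ∈ ℝ^n` under a subgroup `G` of the
orthogonal group `O(n)`. -/
def orbitSet {n : ℕ} (G : Subgroup (Matrix.orthogonalGroup (Fin n) ℝ)) (x : E n) :
    Set (E n) :=
  {y | ∃ g ∈ G, Matrix.mulVec (g : Matrix (Fin n) (Fin n) ℝ) x = y}

/-- First component of `ℝ^{δ+ν} = ℝ^δ × ℝ^ν`. -/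
def split1 {δ ν : ℕ} (x : E (δ + ν)) : E δ := WithLp.toLp 2 (fun i => x (Fin.castAdd ν i))

/-- Second component of `ℝ^{δ+ν} = ℝ^δ × ℝ^ν`. -/
def split2 {δ ν : ℕ} (x : E (δ + ν)) : E ν := WithLp.toLp 2 (fun i => x (Fin.natAdd δ i))

/-- The identification `ℝ^δ × ℝ^ν → ℝ^{δ+ν}`. -/
def joinE {δ ν : ℕ} (x : E δ) (y : E ν) : E (δ + ν) :=
  WithLp.toLp 2 (fun i => Fin.addCases (motive := fun _ => ℝ) (fun i₁ => x i₁) (fun i₂ => y i₂) i)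

namespace GInvAux

variable {δ ν : ℕ}

lemma split1_joinE (a : E δ) (b : E ν) : split1 (joinE a b) = a := by
  ext i; simp [split1, joinE]

lemma split2_joinE (a : E δ) (b : E ν) : split2 (joinE a b) = b := by
  ext i; simp [split2, joinE]

lemma joinE_split (z : E (δ + ν)) : joinE (split1 z) (split2 z) = z := by
  ext i
  refine Fin.addCases (motive := fun i => joinE (split1 z) (split2 z) i = z i) ?_ ?_ i <;>
    intro j <;> simp [joinE, split1, split2]

lemma continuous_split1 : Continuous (split1 : E (δ + ν) → E δ) :=
  (PiLp.continuous_toLp 2 _).comp (continuous_pi fun _ => (continuous_apply _).comp (PiLp.continuous_ofLp 2 _))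

lemma continuous_split2 : Continuous (split2 : E (δ + ν) → E ν) :=
  (PiLp.continuous_toLp 2 _).comp (continuous_pi fun _ => (continuous_apply _).comp (PiLp.continuous_ofLp 2 _))

lemma continuous_joinE : Continuous (fun w : E δ × E ν => joinE w.1 w.2) := by
  apply (PiLp.continuous_toLp 2 _).comp
  apply continuous_pi
  intro i
  refine Fin.addCases (motive := fun i => Continuous fun w : E δ × E ν => joinE w.1 w.2 i)
    ?_ ?_ i <;> intro j <;> simp only [joinE, Fin.addCases_left, Fin.addCases_right]
  · exact (continuous_apply _).comp ((PiLp.continuous_ofLp 2 _).comp continuous_fst)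
  · exact (continuous_apply _).comp ((PiLp.continuous_ofLp 2 _).comp continuous_snd)

/-- The measurable equivalence `ℝ^{δ+ν} ≃ ℝ^δ × ℝ^ν`. -/
def splitEquiv (δ ν : ℕ) : E (δ + ν) ≃ᵐ E δ × E ν :=
  ((MeasurableEquiv.toLp 2 (Fin (δ + ν) → ℝ)).symm).trans <|
    ((MeasurableEquiv.piCongrLeft (fun _ : Fin (δ + ν) => ℝ) finSumFinEquiv).symm).trans <|
      (MeasurableEquiv.sumPiEquivProdPi (fun _ : Fin δ ⊕ Fin ν => ℝ)).trans <|
        (((MeasurableEquiv.toLp 2 (Fin δ → ℝ)).symm).symm.prodCongr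
          ((MeasurableEquiv.toLp 2 (Fin ν → ℝ)).symm).symm)

lemma splitEquiv_apply (z : E (δ + ν)) : splitEquiv δ ν z = (split1 z, split2 z) := by
  ext <;>
  simp [splitEquiv, MeasurableEquiv.piCongrLeft, Equiv.piCongrLeft,
    MeasurableEquiv.sumPiEquivProdPi, Equiv.sumPiEquivProdPi, split1, split2,
    MeasurableEquiv.toLp, Equiv.piCongrLeft', MeasurableEquiv.prodCongr,
    Equiv.prodCongr] <;> rfl

lemma splitEquiv_symm_apply (w : E δ × E ν) : (splitEquiv δ ν).symm w = joinE w.1 w.2 := by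
  have : splitEquiv δ ν (joinE w.1 w.2) = w := by
    rw [splitEquiv_apply, split1_joinE, split2_joinE]
  exact (Equiv.symm_apply_eq _).2 this.symm

lemma splitEquiv_measurePreserving :
    MeasurePreserving (splitEquiv δ ν) volume volume := by
  have h1 := EuclideanSpace.volume_preserving_symm_measurableEquiv_toLp (Fin (δ + ν))
  have h2 := (volume_measurePreserving_piCongrLeft (fun _ : Fin (δ + ν) => ℝ)
    finSumFinEquiv).symm (MeasurableEquiv.piCongrLeft (fun _ : Fin (δ + ν) => ℝ) finSumFinEquiv)
  have h3 := volume_measurePreserving_sumPiEquivProdPi (fun _ : Fin δ ⊕ Fin ν => ℝ)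
  have h4 := ((EuclideanSpace.volume_preserving_symm_measurableEquiv_toLp (Fin δ)).symm _).prod
    ((EuclideanSpace.volume_preserving_symm_measurableEquiv_toLp (Fin ν)).symm _)
  exact ((h4.comp h3).comp h2).comp h1

end GInvAux

open GInvAux in
/-- If `φ : A → U × V` is a `C¹` diffeomorphism (of a bounded open `A ⊆ ℝ^N`,
`N = δ + ν`, onto a product `U × V` of bounded open sets `U ⊆ ℝ^δ`, `V ⊆ ℝ^ν`) whose
inverse `ψ` has Jacobian determinant with `C₀ ≤ |det Dψ| ≤ D₀`, and
`U × Π₂(φ(y)) ⊆ φ(O^y_G ∩ A)` for all `y ∈ A`, then there are constants `c, C > 0`,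
independent of `u`, such that every `G`-invariant `u ∈ L^p(A)` (`p > 1`) is of the form
`u(ψ(v₁, v₂)) = ũ(v₂)` with `ũ ∈ L^p(V)`, and
`c‖ũ‖_{L^p(V)} ≤ ‖u‖_{L^p(A)} ≤ C‖ũ‖_{L^p(V)}`. -/
theorem G_invariant_chart_Lp_comparison (δ ν : ℕ)
    (G : Subgroup (Matrix.orthogonalGroup (Fin (δ + ν)) ℝ))
    (hGc : IsCompact (G : Set (Matrix.orthogonalGroup (Fin (δ + ν)) ℝ)))
    (A : Set (E (δ + ν))) (hAo : IsOpen A) (hAb : IsBounded A)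
    (U : Set (E δ)) (V : Set (E ν)) (hUo : IsOpen U) (hVo : IsOpen V)
    (hUb : IsBounded U) (hVb : IsBounded V)
    (φ ψ : E (δ + ν) → E (δ + ν))
    (hφ : ContDiffOn ℝ 1 φ A)
    (hψ : ContDiffOn ℝ 1 ψ {z | split1 z ∈ U ∧ split2 z ∈ V})
    (hφim : φ '' A = {z | split1 z ∈ U ∧ split2 z ∈ V})
    (hinv1 : ∀ x ∈ A, ψ (φ x) = x)
    (hinv2 : ∀ z, split1 z ∈ U → split2 z ∈ V → φ (ψ z) = z)
    (C₀ D₀ : ℝ) (hC₀ : 0 < C₀) (hCD : C₀ ≤ D₀)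
    (hdet : ∀ z, split1 z ∈ U → split2 z ∈ V →
      C₀ ≤ |(fderiv ℝ ψ z).det| ∧ |(fderiv ℝ ψ z).det| ≤ D₀)
    (horb : ∀ y ∈ A, ∀ v₁ ∈ U, joinE v₁ (split2 (φ y)) ∈ φ '' (orbitSet G y ∩ A))
    (p : ℝ) (hp : 1 < p) :
    ∃ c > 0, ∃ C > 0, ∀ u : E (δ + ν) → ℝ,
      MemLp u (ENNReal.ofReal p) (volume.restrict A) →
      (∀ g ∈ G, ∀ x : E (δ + ν), x ∈ A →
        WithLp.toLp 2 (Matrix.mulVec (g : Matrix (Fin (δ + ν)) (Fin (δ + ν)) ℝ) x) ∈ A →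
        u (WithLp.toLp 2 (Matrix.mulVec (g : Matrix (Fin (δ + ν)) (Fin (δ + ν)) ℝ) x)) = u x) →
      ∃ ut : E ν → ℝ,
        (∀ v₁ ∈ U, ∀ v₂ ∈ V, u (ψ (joinE v₁ v₂)) = ut v₂) ∧
        MemLp ut (ENNReal.ofReal p) (volume.restrict V) ∧
        c * (∫ v₂ in V, |ut v₂| ^ p) ^ (1 / p)
            ≤ (∫ x in A, |u x| ^ p) ^ (1 / p) ∧
        (∫ x in A, |u x| ^ p) ^ (1 / p)
            ≤ C * (∫ v₂ in V, |ut v₂| ^ p) ^ (1 / p) := by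
  classical
  have hp0 : (0 : ℝ) < p := lt_trans one_pos hp
  have hp0' : p ≠ 0 := ne_of_gt hp0
  have h1p : (0 : ℝ) < 1 / p := by positivity
  set P : Set (E (δ + ν)) := {z | split1 z ∈ U ∧ split2 z ∈ V} with hPdef
  by_cases hUV : U.Nonempty ∧ V.Nonempty
  swap
  · -- degenerate case: `A` is empty
    have hAempty : A = ∅ := by
      have him : φ '' A = ∅ := by
        rw [hφim]
        ext z
        simp only [Set.mem_empty_iff_false, iff_false]
        intro hzP
        exact hUV ⟨⟨_, hzP.1⟩, ⟨_, hzP.2⟩⟩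
      exact Set.image_eq_empty.1 him
    refine ⟨1, one_pos, 1, one_pos, fun u hu hGu => ⟨fun _ => 0, ?_, MemLp.zero', ?_, ?_⟩⟩
    · intro v₁ h1 v₂ h2
      exact absurd ⟨⟨v₁, h1⟩, ⟨v₂, h2⟩⟩ hUV
    all_goals
      simp [hAempty, abs_zero, Real.zero_rpow hp0', Real.zero_rpow (ne_of_gt h1p)]
  obtain ⟨⟨v10, hv10⟩, hVne⟩ := hUV
  -- basic geometry
  have hUmeas : MeasurableSet U := hUo.measurableSet
  have hVmeas : MeasurableSet V := hVo.measurableSet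
  have hμU0 : volume U ≠ 0 := hUo.measure_ne_zero volume ⟨v10, hv10⟩
  have hμUlt : volume U < ∞ := hUb.measure_lt_top
  set mU : ℝ := (volume U).toReal with hmUdef
  have hmU : 0 < mU := ENNReal.toReal_pos hμU0 hμUlt.ne
  have hD₀ : 0 < D₀ := lt_of_lt_of_le hC₀ hCD
  have hPo : IsOpen P := (hUo.preimage continuous_split1).inter (hVo.preimage continuous_split2)
  have hPmeas : MeasurableSet P := hPo.measurableSet
  have hψA : ∀ z ∈ P, ψ z ∈ A ∧ φ (ψ z) = z := by
    intro z hz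
    have hz' : z ∈ φ '' A := by rw [hφim]; exact hz
    obtain ⟨x, hx, rfl⟩ := hz'
    rw [hinv1 x hx]; exact ⟨hx, rfl⟩
  have hψP : ψ '' P = A := by
    apply Set.Subset.antisymm
    · rintro _ ⟨z, hz, rfl⟩; exact (hψA z hz).1
    · intro x hx
      have hφx : φ x ∈ P := by rw [← hφim]; exact Set.mem_image_of_mem φ hx
      exact ⟨φ x, hφx, hinv1 x hx⟩
  have hinj : Set.InjOn ψ P := by
    intro z₁ h₁ z₂ h₂ he
    rw [← hinv2 z₁ h₁.1 h₁.2, ← hinv2 z₂ h₂.1 h₂.2, he]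
  have hφdiff : ∀ x ∈ A, DifferentiableAt ℝ φ x := fun x hx =>
    (hφ.contDiffAt (hAo.mem_nhds hx)).differentiableAt one_ne_zero
  have hφinj : Set.InjOn φ A := fun x hx y hy he => by
    rw [← hinv1 x hx, ← hinv1 y hy, he]
  have hψ' : ∀ z ∈ P, HasFDerivWithinAt ψ (fderiv ℝ ψ z) P z := fun z hz =>
    (((hψ.contDiffAt (hPo.mem_nhds hz)).differentiableAt one_ne_zero).hasFDerivAt).hasFDerivWithinAt
  -- constants
  refine ⟨(C₀ * mU) ^ (1 / p), Real.rpow_pos_of_pos (by positivity) _,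
    (D₀ * mU) ^ (1 / p), Real.rpow_pos_of_pos (by positivity) _, fun u hu hGu => ?_⟩
  -- the function of the second variable
  set ut : E ν → ℝ := fun b => u (ψ (joinE v10 b)) with hutdef
  have hkey : ∀ z ∈ P, u (ψ z) = ut (split2 z) := by
    intro z hz
    have hz' : z ∈ φ '' A := by rw [hφim]; exact hz
    obtain ⟨x, hxA, hφx⟩ := hz'
    have h2 : split2 (φ x) = split2 z := by rw [hφx]
    obtain ⟨x', ⟨⟨g, hg, hgx⟩, hx'A⟩, hφx'⟩ := horb x hxA v10 hv10
    have hux' : u x' = u x := by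
      rw [show x' = WithLp.toLp 2 ((g : Matrix (Fin (δ + ν)) (Fin (δ + ν)) ℝ).mulVec x) by rw [hgx]] at hx'A ⊢
      exact hGu g hg x hxA hx'A
    have hψz : ψ z = x := by rw [← hφx, hinv1 x hxA]
    have hjoin : joinE v10 (split2 z) = φ x' := by rw [← h2, hφx']
    calc u (ψ z) = u x := by rw [hψz]
      _ = u x' := hux'.symm
      _ = u (ψ (φ x')) := by rw [hinv1 x' hx'A]
      _ = ut (split2 z) := by rw [hutdef, ← hjoin]
  have hfirst : ∀ v₁ ∈ U, ∀ v₂ ∈ V, u (ψ (joinE v₁ v₂)) = ut v₂ := by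
    intro v₁ h1 v₂ h2
    have hz : joinE v₁ v₂ ∈ P :=
      ⟨by rw [split1_joinE]; exact h1, by rw [split2_joinE]; exact h2⟩
    have := hkey _ hz
    rwa [split2_joinE] at this
  -- measurability of ut
  set u' : E (δ + ν) → ℝ := hu.1.mk u with hu'def
  have hu'sm : StronglyMeasurable u' := hu.1.stronglyMeasurable_mk
  have huae : u =ᵐ[volume.restrict A] u' := hu.1.ae_eq_mk
  obtain ⟨t, hts, htm, ht0⟩ := exists_measurable_superset_of_null (ae_iff.1 huae)
  set s : Set (E (δ + ν)) := t ∩ A with hsdef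
  have hsm : MeasurableSet s := htm.inter hAo.measurableSet
  have hs0 : volume s = 0 := by
    have h := ht0
    rw [Measure.restrict_apply htm] at h
    exact h
  have himg0 : volume (φ '' s) = 0 := by
    rw [← lintegral_abs_det_fderiv_eq_addHaar_image volume hsm
      (fun x hx => ((hφdiff x hx.2).hasFDerivAt).hasFDerivWithinAt)
      (hφinj.mono Set.inter_subset_right)]
    exact setLIntegral_measure_zero _ _ hs0
  have hcomp_ae : (fun z => u (ψ z)) =ᵐ[volume.restrict P] fun z => u' (ψ z) := by
    have hnull : ∀ᵐ z ∂(volume : Measure (E (δ + ν))), z ∉ φ '' s := by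
      rw [ae_iff]
      simpa only [not_not, Set.setOf_mem_eq] using himg0
    refine (ae_restrict_iff' hPmeas).2 ?_
    filter_upwards [hnull] with z hz hzP
    by_contra hne
    apply hz
    have hψzs : ψ z ∈ s := ⟨hts hne, (hψA z hzP).1⟩
    have : φ (ψ z) ∈ φ '' s := Set.mem_image_of_mem φ hψzs
    rwa [(hψA z hzP).2] at this
  have hkey_ae : (fun z => ut (split2 z)) =ᵐ[volume.restrict P] fun z => u' (ψ z) := by
    have h0 : (fun z => ut (split2 z)) =ᵐ[volume.restrict P] fun z => u (ψ z) :=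
      (ae_restrict_iff' hPmeas).2 (ae_of_all _ fun z hz => (hkey z hz).symm)
    exact h0.trans hcomp_ae
  -- transfer to the product
  set T := splitEquiv δ ν with hTdef
  have hTpre : ⇑T ⁻¹' (U ×ˢ V) = P := by
    ext z
    simp [hTdef, splitEquiv_apply, hPdef]
  set π : Measure (E δ × E ν) := (volume.restrict U).prod (volume.restrict V) with hπdef
  have hπ : Measure.map T (volume.restrict P) = π := by
    rw [hπdef, Measure.prod_restrict, ← Measure.volume_eq_prod, ← hTpre,
      ← Measure.restrict_map T.measurable (hUmeas.prod hVmeas),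
      splitEquiv_measurePreserving.map_eq]
  have hTrp : MeasurePreserving T (volume.restrict P) π := ⟨T.measurable, hπ⟩
  have hae2 : ∀ᵐ z ∂volume.restrict P, ut (split2 z) = u' (ψ z) := hkey_ae
  have hae3 : ∀ᵐ z ∂volume.restrict P,
      ut ((T z).2) = u' (ψ (joinE (T z).1 (T z).2)) := by
    filter_upwards [hae2] with z h
    simp only [hTdef, splitEquiv_apply, joinE_split]
    exact h
  have hprod_ae : (fun w : E δ × E ν => ut w.2) =ᵐ[π] fun w => u' (ψ (joinE w.1 w.2)) := by
    have h4 := (T.measurableEmbedding.ae_map_iff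
      (p := fun w : E δ × E ν => ut w.2 = u' (ψ (joinE w.1 w.2)))).2 hae3
    rw [hπ] at h4
    exact h4
  have hslice : ∀ᵐ a ∂volume.restrict U,
      ∀ᵐ b ∂volume.restrict V, ut b = u' (ψ (joinE a b)) :=
    Measure.ae_ae_of_ae_prod hprod_ae
  have hUrne : volume.restrict U ≠ 0 :=
    fun h0 => hμU0 (Measure.restrict_eq_zero.1 h0)
  haveI : (ae (volume.restrict U)).NeBot := ae_neBot.2 hUrne
  obtain ⟨a, ha, haU⟩ := (hslice.and (ae_restrict_mem hUmeas)).exists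
  have hcontV : ContinuousOn (fun b => ψ (joinE a b)) V := by
    refine hψ.continuousOn.comp ?_ ?_
    · exact (continuous_joinE.comp (Continuous.prodMk_right a)).continuousOn
    · intro b hb
      exact ⟨by rw [split1_joinE]; exact haU, by rw [split2_joinE]; exact hb⟩
  have hut_aem : AEMeasurable ut (volume.restrict V) := by
    have ha' : ut =ᵐ[volume.restrict V] fun b => u' (ψ (joinE a b)) := ha
    refine AEMeasurable.congr ?_ ha'.symm
    exact hu'sm.measurable.comp_aemeasurable (hcontV.aemeasurable hVmeas)
  have habs_meas : Measurable (fun y : ℝ => ENNReal.ofReal (|y| ^ p)) := by fun_prop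
  -- lintegral quantities
  set LA : ℝ≥0∞ := ∫⁻ x in A, ENNReal.ofReal (|u x| ^ p) ∂volume with hLAdef
  set LV : ℝ≥0∞ := ∫⁻ b in V, ENNReal.ofReal (|ut b| ^ p) ∂volume with hLVdef
  set Q : ℝ≥0∞ := ∫⁻ z in P, ENNReal.ofReal (|u (ψ z)| ^ p) ∂volume with hQdef
  have hCOV : LA = ∫⁻ z in P,
      ENNReal.ofReal |(fderiv ℝ ψ z).det| * ENNReal.ofReal (|u (ψ z)| ^ p) ∂volume := by
    rw [hLAdef, show A = ψ '' P from hψP.symm]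
    exact lintegral_image_eq_lintegral_abs_det_fderiv_mul volume hPmeas hψ' hinj _
  have hlowQ : ENNReal.ofReal C₀ * Q ≤ LA := by
    rw [hCOV, hQdef, ← lintegral_const_mul' _ _ ofReal_ne_top]
    refine lintegral_mono_ae ((ae_restrict_iff' hPmeas).2 (ae_of_all _ fun z hz => ?_))
    exact mul_le_mul_left (ENNReal.ofReal_le_ofReal (hdet z hz.1 hz.2).1) _
  have hhighQ : LA ≤ ENNReal.ofReal D₀ * Q := by
    rw [hCOV, hQdef, ← lintegral_const_mul' _ _ ofReal_ne_top]
    refine lintegral_mono_ae ((ae_restrict_iff' hPmeas).2 (ae_of_all _ fun z hz => ?_))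
    exact mul_le_mul_left (ENNReal.ofReal_le_ofReal (hdet z hz.1 hz.2).2) _
  have hg : AEMeasurable (fun b => ENNReal.ofReal (|ut b| ^ p)) (volume.restrict V) :=
    habs_meas.comp_aemeasurable hut_aem
  have hmapsnd : Measure.map Prod.snd π = volume U • volume.restrict V := by
    rw [hπdef, Measure.map_snd_prod, Measure.restrict_apply_univ]
  have hQ : Q = volume U * LV := by
    have h1 : Q = ∫⁻ z in P, ENNReal.ofReal (|ut (split2 z)| ^ p) ∂volume := by
      rw [hQdef]
      refine lintegral_congr_ae ((ae_restrict_iff' hPmeas).2 (ae_of_all _ fun z hz => ?_))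
      exact congrArg (fun r : ℝ => ENNReal.ofReal (|r| ^ p)) (hkey z hz)
    have h2 := hTrp.lintegral_comp_emb T.measurableEmbedding
      (fun w : E δ × E ν => ENNReal.ofReal (|ut w.2| ^ p))
    have h2' : ∫⁻ z in P, ENNReal.ofReal (|ut (split2 z)| ^ p) ∂volume
        = ∫⁻ w, ENNReal.ofReal (|ut w.2| ^ p) ∂π := by
      rw [← h2]
      exact lintegral_congr fun z => by rw [hTdef, splitEquiv_apply]
    have hf' : AEMeasurable (fun b => ENNReal.ofReal (|ut b| ^ p)) (Measure.map Prod.snd π) := by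
      rw [hmapsnd]
      exact hg.smul_measure _
    have h3 : ∫⁻ w, ENNReal.ofReal (|ut w.2| ^ p) ∂π
        = ∫⁻ b, ENNReal.ofReal (|ut b| ^ p) ∂(Measure.map Prod.snd π) :=
      (lintegral_map' hf' measurable_snd.aemeasurable).symm
    rw [h1, h2', h3, hmapsnd, lintegral_smul_measure, hLVdef, smul_eq_mul]
  have hofp0 : (ENNReal.ofReal p) ≠ 0 := (ENNReal.ofReal_pos.2 hp0).ne'
  have hofptop : (ENNReal.ofReal p) ≠ ∞ := ofReal_ne_top
  have hnorm_eq : ∀ (r : ℝ), ‖r‖ₑ ^ p = ENNReal.ofReal (|r| ^ p) := fun r => by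
    rw [Real.enorm_eq_ofReal_abs, ENNReal.ofReal_rpow_of_nonneg (abs_nonneg _) hp0.le]
  have hLAfin : LA ≠ ∞ := by
    have h := hu.2
    rw [eLpNorm_eq_lintegral_rpow_enorm_toReal hofp0 hofptop, ENNReal.toReal_ofReal hp0.le] at h
    have heq : (∫⁻ x in A, ‖u x‖ₑ ^ p ∂volume) = LA :=
      lintegral_congr fun x => hnorm_eq (u x)
    rw [heq] at h
    exact ((ENNReal.rpow_lt_top_iff_of_pos h1p).1 h).ne
  have hC₀0 : ENNReal.ofReal C₀ ≠ 0 := (ENNReal.ofReal_pos.2 hC₀).ne'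
  have hlow : ENNReal.ofReal C₀ * (volume U * LV) ≤ LA := by rw [← hQ]; exact hlowQ
  have hhigh : LA ≤ ENNReal.ofReal D₀ * (volume U * LV) := by rw [← hQ]; exact hhighQ
  have hLVfin : LV ≠ ∞ := by
    by_contra h
    have : ENNReal.ofReal C₀ * (volume U * LV) = ∞ := by
      rw [h, ENNReal.mul_top hμU0, ENNReal.mul_top hC₀0]
    rw [this, top_le_iff] at hlow
    exact hLAfin hlow
  have hmemV : MemLp ut (ENNReal.ofReal p) (volume.restrict V) := by
    refine ⟨hut_aem.aestronglyMeasurable, ?_⟩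
    rw [eLpNorm_eq_lintegral_rpow_enorm_toReal hofp0 hofptop, ENNReal.toReal_ofReal hp0.le]
    have heq : (∫⁻ b in V, ‖ut b‖ₑ ^ p ∂volume) = LV :=
      lintegral_congr fun b => hnorm_eq (ut b)
    rw [heq]
    exact ENNReal.rpow_lt_top_of_nonneg (by positivity) hLVfin
  -- Bochner integrals
  have hIA : (∫ x in A, |u x| ^ p) = LA.toReal := by
    rw [integral_eq_lintegral_of_nonneg_ae (ae_of_all _ fun x => Real.rpow_nonneg (abs_nonneg _) p)
      (((by fun_prop : Measurable fun y : ℝ => |y| ^ p)).comp_aemeasurable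
        hu.1.aemeasurable).aestronglyMeasurable]
  have hIV : (∫ b in V, |ut b| ^ p) = LV.toReal := by
    rw [integral_eq_lintegral_of_nonneg_ae (ae_of_all _ fun b => Real.rpow_nonneg (abs_nonneg _) p)
      (((by fun_prop : Measurable fun y : ℝ => |y| ^ p)).comp_aemeasurable
        hut_aem).aestronglyMeasurable]
  refine ⟨ut, hfirst, hmemV, ?_, ?_⟩
  · -- lower bound
    rw [hIA, hIV]
    have h1 : (ENNReal.ofReal C₀ * (volume U * LV)).toReal ≤ LA.toReal :=
      ENNReal.toReal_mono hLAfin hlow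
    have h2 : (ENNReal.ofReal C₀ * (volume U * LV)).toReal = C₀ * mU * LV.toReal := by
      rw [ENNReal.toReal_mul, ENNReal.toReal_mul, ENNReal.toReal_ofReal hC₀.le, hmUdef, mul_assoc]
    calc (C₀ * mU) ^ (1 / p) * LV.toReal ^ (1 / p)
        = (C₀ * mU * LV.toReal) ^ (1 / p) :=
          (Real.mul_rpow (by positivity) ENNReal.toReal_nonneg).symm
      _ ≤ LA.toReal ^ (1 / p) :=
          Real.rpow_le_rpow (by positivity) (by rw [← h2]; exact h1) h1p.le
  · -- upper bound
    rw [hIA, hIV]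
    have hfin : ENNReal.ofReal D₀ * (volume U * LV) ≠ ∞ :=
      ENNReal.mul_ne_top ofReal_ne_top (ENNReal.mul_ne_top hμUlt.ne hLVfin)
    have h1 : LA.toReal ≤ (ENNReal.ofReal D₀ * (volume U * LV)).toReal :=
      ENNReal.toReal_mono hfin hhigh
    have h2 : (ENNReal.ofReal D₀ * (volume U * LV)).toReal = D₀ * mU * LV.toReal := by
      rw [ENNReal.toReal_mul, ENNReal.toReal_mul, ENNReal.toReal_ofReal hD₀.le, hmUdef, mul_assoc]
    calc LA.toReal ^ (1 / p)
        ≤ (D₀ * mU * LV.toReal) ^ (1 / p) :=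
          Real.rpow_le_rpow ENNReal.toReal_nonneg (by rw [← h2]; exact h1) h1p.le
      _ = (D₀ * mU) ^ (1 / p) * LV.toReal ^ (1 / p) :=
          Real.mul_rpow (by positivity) ENNReal.toReal_nonneg
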